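/- Let (S,K,I) be a split graph and let u,v be distinct vertices of I. Then σ_{uv}(S) = 0 and deg_S(v) ≤ deg_S(u) hold if and only if N_S(v) ⊆ N_S(u). -/

import Mathlib

open SimpleGraph

/-- `T` is a 4-element vertex subset of `S` whose induced subgraph is a path on 4 vertices. -/
def IsInducedP4 {V : Type*} (S : SimpleGraph V) (T : Finset V) : Prop :=
  T.card = 4 ∧ Nonempty (S.induce (T : Set V) ≃g pathGraph 4)

/-- `σ_{uv}(S)`: the number of induced `P4`'s of `S` containing both `u` and `v`. -/
noncomputable def sigmaP4 {V : Type*} (S : SimpleGraph V) (u v : V) : ℕ :=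
  Nat.card {T : Finset V // IsInducedP4 S T ∧ u ∈ T ∧ v ∈ T}

/-- Construction: four vertices with the path adjacency pattern give an induced `P4`. -/
lemma isInducedP4_of {V : Type*} [DecidableEq V] (S : SimpleGraph V) (a b c d : V)
    (hab : S.Adj a b) (hbc : S.Adj b c) (hcd : S.Adj c d)
    (hac : ¬S.Adj a c) (had : ¬S.Adj a d) (hbd : ¬S.Adj b d) :
    IsInducedP4 S {a, b, c, d} := by
  have hne_ab : a ≠ b := hab.ne
  have hne_bc : b ≠ c := hbc.ne
  have hne_cd : c ≠ d := hcd.ne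
  have hne_ac : a ≠ c := fun h => had (by rw [h]; exact hcd)
  have hne_bd : b ≠ d := fun h => had (by rw [← h]; exact hab)
  have hne_ad : a ≠ d := fun h => hac (by rw [h]; exact hcd.symm)
  have hba : S.Adj b a := hab.symm
  have hcb : S.Adj c b := hbc.symm
  have hdc : S.Adj d c := hcd.symm
  have hca : ¬S.Adj c a := fun h => hac h.symm
  have hda : ¬S.Adj d a := fun h => had h.symm
  have hdb : ¬S.Adj d b := fun h => hbd h.symm
  have hcard : ({a, b, c, d} : Finset V).card = 4 := by
    rw [Finset.card_insert_of_notMem (by simp [hne_ab, hne_ac, hne_ad]),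
      Finset.card_insert_of_notMem (by simp [hne_bc, hne_bd]),
      Finset.card_insert_of_notMem (by simp [hne_cd]), Finset.card_singleton]
  refine ⟨hcard, ?_⟩
  have ha : a ∈ (({a, b, c, d} : Finset V) : Set V) := by simp
  have hb : b ∈ (({a, b, c, d} : Finset V) : Set V) := by simp
  have hc : c ∈ (({a, b, c, d} : Finset V) : Set V) := by simp
  have hd : d ∈ (({a, b, c, d} : Finset V) : Set V) := by simp
  let f : Fin 4 → (({a, b, c, d} : Finset V) : Set V) := ![⟨a, ha⟩, ⟨b, hb⟩, ⟨c, hc⟩, ⟨d, hd⟩]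
  have hbij : Function.Bijective f := by
    constructor
    · intro i j hij
      fin_cases i <;> fin_cases j <;>
        simp_all [f, Subtype.ext_iff, hne_ab, hne_bc, hne_cd, hne_ac, hne_bd, hne_ad,
          hne_ab.symm, hne_bc.symm, hne_cd.symm, hne_ac.symm, hne_bd.symm, hne_ad.symm]
    · rintro ⟨x, hx⟩
      simp only [Finset.coe_insert, Set.mem_insert_iff, Finset.coe_singleton,
        Set.mem_singleton_iff] at hx
      rcases hx with rfl | rfl | rfl | rfl
      exacts [⟨0, rfl⟩, ⟨1, rfl⟩, ⟨2, rfl⟩, ⟨3, rfl⟩]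
  refine ⟨(RelIso.mk (Equiv.ofBijective f hbij) ?_).symm⟩
  intro i j
  fin_cases i <;> fin_cases j <;>
    simp +decide [f, Equiv.ofBijective, pathGraph_adj, comap_adj, Function.Embedding.subtype_apply,
      hab, hbc, hcd, hac, had, hbd, hba, hcb, hdc, hca, hda, hdb, S.irrefl]

/-- Key structural lemma: in a split graph, an induced `P4` containing two independent-set
vertices `u ≠ v` must have them as endpoints, hence `v` has a neighbor not adjacent to `u`. -/
lemma key {V : Type*} [Fintype V] [DecidableEq V] (S : SimpleGraph V) (K I : Finset V)
    (hpart : K ∪ I = Finset.univ)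
    (hK : S.IsClique (K : Set V)) (hI : Sᶜ.IsClique (I : Set V))
    (u v : V) (hu : u ∈ I) (hv : v ∈ I) (huv : u ≠ v)
    (T : Finset V) (hT : IsInducedP4 S T) (huT : u ∈ T) (hvT : v ∈ T) :
    ∃ x, S.Adj v x ∧ ¬S.Adj u x := by
  -- adjacent to a vertex of I forces membership in K
  have toK : ∀ ⦃w z : V⦄, S.Adj w z → z ∈ I → w ∈ K := by
    intro w z hwz hz
    by_contra hw
    have hwI : w ∈ I := by
      have := Finset.mem_univ w
      rw [← hpart, Finset.mem_union] at this
      tauto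
    exact ((Sᶜ).isClique_iff.mp hI (Finset.mem_coe.mpr hwI) (Finset.mem_coe.mpr hz) hwz.ne).2 hwz
  have hnadjI : ∀ ⦃w z : V⦄, w ∈ I → z ∈ I → w ≠ z → ¬S.Adj w z := by
    intro w z hw hz hwz
    exact ((Sᶜ).isClique_iff.mp hI (Finset.mem_coe.mpr hw) (Finset.mem_coe.mpr hz) hwz).2
  obtain ⟨hcard, ⟨φ⟩⟩ := hT
  let ψ := φ.symm
  set a : V := (ψ 0 : V) with ha
  set b : V := (ψ 1 : V) with hb
  set c : V := (ψ 2 : V) with hc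
  set d : V := (ψ 3 : V) with hd
  have hinj : Function.Injective fun i : Fin 4 => ((ψ i : V)) :=
    Subtype.val_injective.comp ψ.toEquiv.injective
  have adj_iff : ∀ i j : Fin 4, (pathGraph 4).Adj i j ↔ S.Adj (ψ i : V) (ψ j : V) := by
    intro i j
    rw [← ψ.map_adj_iff]
    simp [comap_adj, Function.Embedding.subtype_apply]
  have hab : S.Adj a b := (adj_iff 0 1).mp (by rw [pathGraph_adj]; decide)
  have hbc : S.Adj b c := (adj_iff 1 2).mp (by rw [pathGraph_adj]; decide)
  have hcd : S.Adj c d := (adj_iff 2 3).mp (by rw [pathGraph_adj]; decide)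
  have hac : ¬S.Adj a c := fun h => by
    have := (adj_iff 0 2).mpr h; rw [pathGraph_adj] at this; exact absurd this (by decide)
  have had : ¬S.Adj a d := fun h => by
    have := (adj_iff 0 3).mpr h; rw [pathGraph_adj] at this; exact absurd this (by decide)
  have hbd : ¬S.Adj b d := fun h => by
    have := (adj_iff 1 3).mpr h; rw [pathGraph_adj] at this; exact absurd this (by decide)
  have hne : ∀ i j : Fin 4, i ≠ j → (ψ i : V) ≠ (ψ j : V) := fun i j h => fun e => h (hinj e)
  have hmem : ∀ i : Fin 4, (ψ i : V) ∈ T := fun i => Finset.mem_coe.mp (ψ i).2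
  have hTeq : ({a, b, c, d} : Finset V) = T := by
    apply Finset.eq_of_subset_of_card_le
    · intro x hx
      simp only [Finset.mem_insert, Finset.mem_singleton] at hx
      rcases hx with rfl | rfl | rfl | rfl
      exacts [hmem 0, hmem 1, hmem 2, hmem 3]
    · rw [hcard]
      rw [Finset.card_insert_of_notMem
          (by simp [hne 0 1 (by decide), hne 0 2 (by decide), hne 0 3 (by decide)]; exact ⟨hne 0 1 (by decide), hne 0 2 (by decide), hne 0 3 (by decide)⟩),
        Finset.card_insert_of_notMem (by simp [hne 1 2 (by decide), hne 1 3 (by decide)]; exact ⟨hne 1 2 (by decide), hne 1 3 (by decide)⟩),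
        Finset.card_insert_of_notMem (by simp [hne 2 3 (by decide)]; exact hne 2 3 (by decide)), Finset.card_singleton]
  have huT' : u = a ∨ u = b ∨ u = c ∨ u = d := by
    have := hvT; rw [← hTeq] at huT
    simpa using huT
  have hvT' : v = a ∨ v = b ∨ v = c ∨ v = d := by
    rw [← hTeq] at hvT
    simpa using hvT
  -- helper: contradiction from the two impossible "non-endpoint" configurations
  have case_ac : a ∈ I → c ∈ I → False := by
    intro haI hcI
    have hbK : b ∈ K := toK hab.symm haI
    have hdK : d ∈ K := toK hcd.symm hcI
    exact hbd (S.isClique_iff.mp hK (Finset.mem_coe.mpr hbK) (Finset.mem_coe.mpr hdK)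
      (hne 1 3 (by decide)))
  have case_bd : b ∈ I → d ∈ I → False := by
    intro hbI hdI
    have haK : a ∈ K := toK hab hbI
    have hcK : c ∈ K := toK hcd hdI
    exact hac (S.isClique_iff.mp hK (Finset.mem_coe.mpr haK) (Finset.mem_coe.mpr hcK)
      (hne 0 2 (by decide)))
  rcases huT' with rfl | rfl | rfl | rfl <;> rcases hvT' with rfl | rfl | rfl | rfl
  · exact absurd rfl huv
  · exact absurd hab (hnadjI hu hv hab.ne)
  · exact absurd (case_ac hu hv) id
  · exact ⟨c, hcd.symm, hac⟩
  · exact absurd hab.symm (hnadjI hu hv hab.symm.ne)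
  · exact absurd rfl huv
  · exact absurd hbc (hnadjI hu hv hbc.ne)
  · exact absurd (case_bd hu hv) id
  · exact absurd (case_ac hv hu) id
  · exact absurd hbc.symm (hnadjI hu hv hbc.symm.ne)
  · exact absurd rfl huv
  · exact absurd hcd (hnadjI hu hv hcd.ne)
  · exact ⟨b, hab, fun h => hbd h.symm⟩
  · exact absurd (case_bd hv hu) id
  · exact absurd hcd.symm (hnadjI hu hv hcd.symm.ne)
  · exact absurd rfl huv

theorem stmt1 {V : Type*} [Fintype V] [DecidableEq V] [Nonempty V]
    (S : SimpleGraph V) [DecidableRel S.Adj] (K I : Finset V)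
    (hpart : K ∪ I = Finset.univ) (hdisj : Disjoint K I)
    (hK : S.IsClique (K : Set V)) (hI : Sᶜ.IsClique (I : Set V))
    (u v : V) (hu : u ∈ I) (hv : v ∈ I) (huv : u ≠ v) :
    (sigmaP4 S u v = 0 ∧ S.degree v ≤ S.degree u) ↔
      S.neighborFinset v ⊆ S.neighborFinset u := by
  have toK : ∀ ⦃w z : V⦄, S.Adj w z → z ∈ I → w ∈ K := by
    intro w z hwz hz
    by_contra hw
    have hwI : w ∈ I := by
      have := Finset.mem_univ w
      rw [← hpart, Finset.mem_union] at this
      tauto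
    exact ((Sᶜ).isClique_iff.mp hI (Finset.mem_coe.mpr hwI) (Finset.mem_coe.mpr hz) hwz.ne).2 hwz
  have hnadjuv : ¬S.Adj u v :=
    ((Sᶜ).isClique_iff.mp hI (Finset.mem_coe.mpr hu) (Finset.mem_coe.mpr hv) huv).2
  constructor
  · rintro ⟨hσ, hdeg⟩
    by_contra hN
    obtain ⟨w, hwv, hwu⟩ : ∃ w, w ∈ S.neighborFinset v ∧ w ∉ S.neighborFinset u :=
      Finset.not_subset.mp hN
    rw [mem_neighborFinset] at hwv
    rw [mem_neighborFinset] at hwu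
    -- find x ∈ N(u) \ N(v)
    have hx : ∃ x, S.Adj u x ∧ ¬S.Adj v x := by
      by_contra hcon
      push_neg at hcon
      have hsub : S.neighborFinset u ⊆ S.neighborFinset v := by
        intro x hxu
        rw [mem_neighborFinset] at hxu ⊢
        exact hcon x hxu
      have hss : S.neighborFinset u ⊂ S.neighborFinset v :=
        ⟨hsub, fun h => hwu (by
          have := h (by rwa [mem_neighborFinset] : w ∈ S.neighborFinset v)
          rwa [mem_neighborFinset] at this)⟩
      have := Finset.card_lt_card hss
      rw [← S.card_neighborFinset_eq_degree, ← S.card_neighborFinset_eq_degree] at hdeg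
      omega
    obtain ⟨x, hux, hvx⟩ := hx
    -- build induced P4 : v - w - x - u
    have hwK : w ∈ K := toK hwv.symm hv
    have hxK : x ∈ K := toK hux.symm hu
    have hwx_ne : w ≠ x := fun h => hvx (h ▸ hwv)
    have hwx : S.Adj w x := S.isClique_iff.mp hK (Finset.mem_coe.mpr hwK)
      (Finset.mem_coe.mpr hxK) hwx_ne
    have hP4 : IsInducedP4 S {v, w, x, u} :=
      isInducedP4_of S v w x u hwv hwx hux.symm hvx (fun h => hnadjuv h.symm)
        (fun h => hwu h.symm)
    have hne : Nat.card {T : Finset V // IsInducedP4 S T ∧ u ∈ T ∧ v ∈ T} ≠ 0 :=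
      Nat.card_ne_zero.mpr ⟨⟨⟨{v, w, x, u}, hP4, by simp, by simp⟩⟩, Subtype.finite⟩
    unfold sigmaP4 at hσ
    exact hne hσ
  · intro hN
    constructor
    · have hempty : IsEmpty {T : Finset V // IsInducedP4 S T ∧ u ∈ T ∧ v ∈ T} := by
        constructor
        rintro ⟨T, hT, huT, hvT⟩
        obtain ⟨x, hvx, hux⟩ := key S K I hpart hK hI u v hu hv huv T hT huT hvT
        exact hux (by rw [← mem_neighborFinset]; exact hN (by rwa [mem_neighborFinset]))
      unfold sigmaP4
      exact @Nat.card_of_isEmpty _ hempty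
    · rw [← S.card_neighborFinset_eq_degree, ← S.card_neighborFinset_eq_degree]
      exact Finset.card_le_card hN
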